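/- (Relation between the Ising and lattice-gas grand-canonical partition functions.) Let d ≥ 1, J > 0, β ≥ 0, Λ ⊂ ℤ^d finite, E_Λ := {{x,x'} ⊂ ℤ^d : {x,x'} ∩ Λ ≠ ∅, |x−x'| = 1}, and let Ξ̃⁻_{Λ,β}(h) := Σ_{σ ∈ {−1,1}^Λ} exp(βh Σ_{x∈Λ} σ(x) + βJ Σ_{{x,x'}∈E_Λ} σ(x)σ(x')) be the Ising grand-canonical partition function at external field h with −1 boundary conditions (σ(x') := −1 for x' ∉ Λ), and let Ξ⁰_{Λ,β}(μ) := Σ_{N≥0} e^{βμN} Z⁰_{Λ,β}(N) be the lattice-gas grand-canonical partition function. Then for every h ∈ ℝ, Ξ̃⁻_{Λ,β}(h) = exp(−β(h|Λ| − J|E_Λ|)) · Ξ⁰_{Λ,β}(2h − 4Jd). -/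

import Mathlib

open scoped BigOperators Classical

noncomputable section
namespace IsingCE

/-- squared Euclidean norm on `ℤ^d`; it equals `1` exactly at nearest neighbors. -/
def sqnorm {d : ℕ} (x : Fin d → ℤ) : ℤ := ∑ i, (x i)^2

/-- Boltzmann factor `e^{-βV(x)}` of the hard-core Ising lattice-gas potential:
`0` at the origin (hard core, `V = ∞`), `e^{4βJ}` at nearest neighbors (`V = -4J`),
and `1` otherwise (`V = 0`). -/
noncomputable def boltz (d : ℕ) (β J : ℝ) (x : Fin d → ℤ) : ℝ :=
  if x = 0 then 0 else if sqnorm x = 1 then Real.exp (4*β*J) else 1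

/-- canonical partition function `Z⁰_{Λ,β}(N)` of the lattice gas with zero
boundary conditions:
`Z⁰_{Λ,β}(N) = (1/N!) Σ_{x ∈ Λ^N} Π_{1 ≤ i < j ≤ N} e^{-βV(x_i - x_j)}`. -/
noncomputable def Zcan (d : ℕ) (β J : ℝ) (Λ : Finset (Fin d → ℤ)) (N : ℕ) : ℝ :=
  ((N.factorial : ℝ))⁻¹ *
    ∑ x ∈ Fintype.piFinset (fun _ : Fin N => Λ),
      ∏ i : Fin N, ∏ j ∈ Finset.Ioi i, boltz d β J (x i - x j)

/-- the nearest neighbor of `x` in direction `i`, forwards (`b = true`) or backwards. -/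
def nbr {d : ℕ} (x : Fin d → ℤ) (i : Fin d) (b : Bool) : Fin d → ℤ :=
  fun j => x j + (if j = i then (if b then 1 else -1) else 0)

/-- the number `|E_Λ|` of nearest-neighbor edges meeting `Λ` (as a real number):
edges with both endpoints in `Λ` get the factor `1/2` since they appear twice in
the ordered sum, edges with exactly one endpoint in `Λ` appear once. -/
noncomputable def edgeCount (d : ℕ) (Λ : Finset (Fin d → ℤ)) : ℝ :=
  ∑ x ∈ Λ, ∑ i : Fin d, ∑ b : Bool, (if nbr x i b ∈ Λ then (1/2 : ℝ) else 1)

/-- the `±1`-valued spin configuration on `ℤ^d` determined by the Boolean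
configuration `s` on `Λ` and equal to `-1` outside `Λ`. -/
noncomputable def spinOf {d : ℕ} (Λ : Finset (Fin d → ℤ)) (s : {a // a ∈ Λ} → Bool)
    (x : Fin d → ℤ) : ℝ :=
  if hx : x ∈ Λ then (if s ⟨x, hx⟩ then 1 else -1) else -1

/-- Ising Hamiltonian `H⁻(σ) = -J Σ_{{x,x'} ∈ E_Λ} σ(x)σ(x')` with `-1` boundary
conditions; edges inside `Λ` carry the factor `1/2` since they are counted twice in
the ordered sum. -/
noncomputable def isingH (d : ℕ) (J : ℝ) (Λ : Finset (Fin d → ℤ))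
    (s : {a // a ∈ Λ} → Bool) : ℝ :=
  -J * ∑ x ∈ Λ, ∑ i : Fin d, ∑ b : Bool,
    (if nbr x i b ∈ Λ then (1/2 : ℝ) else 1) * spinOf Λ s x * spinOf Λ s (nbr x i b)

/-- value `±1` of a Boolean spin. -/
def spinval (b : Bool) : ℝ := if b then 1 else -1

/-- grand-canonical partition function
`Ξ⁰_{Λ,β}(μ) = Σ_{N ≥ 0} e^{βμN} Z⁰_{Λ,β}(N)` of the lattice gas with zero
boundary conditions. -/
noncomputable def GCpart (d : ℕ) (β J μ : ℝ) (Λ : Finset (Fin d → ℤ)) : ℝ :=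
  ∑' N : ℕ, Real.exp (β * μ * N) * Zcan d β J Λ N

/-- grand-canonical Ising partition function
`Ξ̃⁻_{Λ,β}(h) = Σ_σ exp(βh Σ_x σ(x) - βH⁻(σ))` with `-1` boundary conditions. -/
noncomputable def XiIsing (d : ℕ) (β J h : ℝ) (Λ : Finset (Fin d → ℤ)) : ℝ :=
  ∑ s : {a // a ∈ Λ} → Bool,
    Real.exp (β * h * (∑ x : {a // a ∈ Λ}, spinval (s x)) - β * isingH d J Λ s)


/-- unit vector in direction `i`, sign `b`. -/
def unitv (d : ℕ) (i : Fin d) (b : Bool) : Fin d → ℤ :=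
  fun j => if j = i then (if b then 1 else -1) else 0

noncomputable def chi (d : ℕ) (z : Fin d → ℤ) : ℝ := if sqnorm z = 1 then 1 else 0

lemma nbr_eq (x : Fin d → ℤ) (i : Fin d) (b : Bool) : nbr x i b = x + unitv d i b := by
  funext j; simp [nbr, unitv]

lemma sqnorm_unitv (i : Fin d) (b : Bool) : sqnorm (unitv d i b) = 1 := by
  simp only [sqnorm, unitv]
  rw [Finset.sum_eq_single i]
  · cases b <;> simp
  · intro j _ hj; simp [hj]
  · simp

lemma sqnorm_neg (z : Fin d → ℤ) : sqnorm (-z) = sqnorm z := by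
  simp [sqnorm]

lemma chi_neg (z : Fin d → ℤ) : chi d (-z) = chi d z := by simp [chi, sqnorm_neg]

lemma chi_zero : chi d (0 : Fin d → ℤ) = 0 := by simp [chi, sqnorm]

lemma sqnorm_eq_one_iff (z : Fin d → ℤ) : sqnorm z = 1 ↔ ∃ i b, z = unitv d i b := by
  constructor
  · intro hz
    have hnn : ∀ j : Fin d, (0:ℤ) ≤ (z j)^2 := fun j => sq_nonneg _
    have hex : ∃ i : Fin d, (z i)^2 ≠ 0 := by
      by_contra hc
      push_neg at hc
      have : sqnorm z = 0 := Finset.sum_eq_zero fun j _ => hc j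
      omega
    obtain ⟨i, hi⟩ := hex
    have h1 : (1:ℤ) ≤ (z i)^2 := lt_of_le_of_ne (hnn i) (Ne.symm hi)
    have hrest : ∑ j ∈ Finset.univ.erase i, (z j)^2 = 1 - (z i)^2 := by
      have h2 := Finset.add_sum_erase Finset.univ (fun j => (z j)^2) (Finset.mem_univ i)
      simp only [sqnorm] at hz
      linarith
    have hrest0 : ∑ j ∈ Finset.univ.erase i, (z j)^2 = 0 := by
      have hge : (0:ℤ) ≤ ∑ j ∈ Finset.univ.erase i, (z j)^2 :=
        Finset.sum_nonneg fun j _ => hnn j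
      omega
    have hzi : (z i)^2 = 1 := by omega
    have hz0 : ∀ j ∈ Finset.univ.erase i, (z j)^2 = 0 :=
      (Finset.sum_eq_zero_iff_of_nonneg fun j _ => hnn j).1 hrest0
    have hzi' : z i = 1 ∨ z i = -1 := by
      exact Int.isUnit_iff.1 (IsUnit.of_mul_eq_one (a := z i) (z i) (by nlinarith))
    refine ⟨i, z i = 1, ?_⟩
    funext j
    by_cases hj : j = i
    · subst hj
      rcases hzi' with h | h <;> simp [unitv, h]
    · have := hz0 j (Finset.mem_erase.2 ⟨hj, Finset.mem_univ j⟩)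
      have : z j = 0 := by nlinarith
      simp [unitv, hj, this]
  · rintro ⟨i, b, rfl⟩; exact sqnorm_unitv i b

lemma unitv_inj {i i' : Fin d} {b b' : Bool} (h : unitv d i b = unitv d i' b') :
    i = i' ∧ b = b' := by
  have hi : i = i' := by
    by_contra hc
    have := congrFun h i
    simp [unitv, hc] at this
    cases b <;> simp_all
  subst hi
  have := congrFun h i
  simp [unitv] at this
  cases b <;> cases b' <;> simp_all


/-- core counting lemma -/
lemma sum_unitv_eq_chi (z : Fin d → ℤ) :
    (∑ i : Fin d, ∑ b : Bool, if z = unitv d i b then (1:ℝ) else 0) = chi d z := by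
  by_cases hz : sqnorm z = 1
  · obtain ⟨i₀, b₀, rfl⟩ := (sqnorm_eq_one_iff z).1 hz
    rw [chi, if_pos hz]
    rw [Finset.sum_eq_single i₀]
    · rw [Fintype.sum_bool]
      rcases Bool.eq_false_or_eq_true b₀ with h | h <;> subst h
      · rw [if_pos rfl, if_neg (fun hc => by simpa using (unitv_inj hc).2)]; norm_num
      · rw [if_neg (fun hc => by simpa using (unitv_inj hc).2), if_pos rfl]; norm_num
    · intro j _ hj
      apply Finset.sum_eq_zero
      intro b _
      rw [if_neg (fun hc => hj ((unitv_inj hc).1).symm)]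
    · simp
  · rw [chi, if_neg hz]
    apply Finset.sum_eq_zero; intro i _; apply Finset.sum_eq_zero; intro b _
    rw [if_neg]
    rintro rfl
    exact hz (sqnorm_unitv i b)

/-- number of ordered nearest-neighbor pairs from `A` to `B` (as a real). -/
noncomputable def nn (d : ℕ) (A B : Finset (Fin d → ℤ)) : ℝ :=
  ∑ x ∈ A, ∑ i : Fin d, ∑ b : Bool, (if nbr x i b ∈ B then (1:ℝ) else 0)

lemma nbr_count (x : Fin d → ℤ) (B : Finset (Fin d → ℤ)) :
    (∑ i : Fin d, ∑ b : Bool, if nbr x i b ∈ B then (1:ℝ) else 0)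
      = ∑ y ∈ B, chi d (y - x) := by
  have key : ∀ y, (∑ i : Fin d, ∑ b : Bool, if nbr x i b = y then (1:ℝ) else 0)
      = chi d (y - x) := by
    intro y
    rw [← sum_unitv_eq_chi (y - x)]
    refine Finset.sum_congr rfl fun i _ => Finset.sum_congr rfl fun b _ => ?_
    refine if_congr ?_ rfl rfl
    rw [nbr_eq]
    constructor
    · intro hy; rw [← hy]; abel
    · intro hy; rw [sub_eq_iff_eq_add] at hy; rw [hy]; abel
  calc (∑ i : Fin d, ∑ b : Bool, if nbr x i b ∈ B then (1:ℝ) else 0)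
      = ∑ i : Fin d, ∑ b : Bool, ∑ y ∈ B, (if nbr x i b = y then (1:ℝ) else 0) := by
        refine Finset.sum_congr rfl fun i _ => Finset.sum_congr rfl fun b _ => ?_
        exact (Finset.sum_ite_eq B (nbr x i b) (fun _ => (1:ℝ))).symm
    _ = ∑ i : Fin d, ∑ y ∈ B, ∑ b : Bool, (if nbr x i b = y then (1:ℝ) else 0) :=
        Finset.sum_congr rfl fun i _ => Finset.sum_comm
    _ = ∑ y ∈ B, ∑ i : Fin d, ∑ b : Bool, (if nbr x i b = y then (1:ℝ) else 0) :=
        Finset.sum_comm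
    _ = ∑ y ∈ B, chi d (y - x) := Finset.sum_congr rfl fun y _ => key y

lemma nn_eq_chi (A B : Finset (Fin d → ℤ)) :
    nn d A B = ∑ x ∈ A, ∑ y ∈ B, chi d (y - x) :=
  Finset.sum_congr rfl fun x _ => nbr_count x B

lemma chi_sub_comm (x y : Fin d → ℤ) : chi d (y - x) = chi d (x - y) := by
  rw [← chi_neg (x - y)]; congr 1; abel

lemma nn_symm (A B : Finset (Fin d → ℤ)) : nn d A B = nn d B A := by
  rw [nn_eq_chi, nn_eq_chi, Finset.sum_comm]
  exact Finset.sum_congr rfl fun p _ => Finset.sum_congr rfl fun q _ => chi_sub_comm q p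

/-- triangular double-counting for a symmetric, zero-diagonal summand -/
lemma sum_Ioi_twice {N : ℕ} (g : Fin N → Fin N → ℝ) (hsym : ∀ i j, g i j = g j i)
    (hdiag : ∀ i, g i i = 0) :
    2 * (∑ i : Fin N, ∑ j ∈ Finset.Ioi i, g i j) = ∑ i : Fin N, ∑ j : Fin N, g i j := by
  calc 2 * (∑ i : Fin N, ∑ j ∈ Finset.Ioi i, g i j)
      = ∑ i : Fin N, ∑ j ∈ Finset.Ioi i, (g j i + g i j) := by
        rw [Finset.mul_sum]
        refine Finset.sum_congr rfl fun i _ => ?_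
        rw [Finset.mul_sum]
        exact Finset.sum_congr rfl fun j _ => by rw [hsym j i]; ring
    _ = ∑ i : Fin N, ∑ j : Fin N, g i j := by
        rw [Finset.sum_sum_Ioi_add_eq_sum_sum_off_diag]
        refine Finset.sum_congr rfl fun i _ => ?_
        refine (Finset.sum_subset (Finset.subset_univ _) fun j _ hj => ?_).trans
          (Finset.sum_congr rfl fun j _ => hsym j i)
        have hji : j = i := by simpa using hj
        rw [hji]; exact hdiag i

lemma boltz_ne_zero {β J : ℝ} {z : Fin d → ℤ} (hz : z ≠ 0) :
    boltz d β J z = Real.exp (4*β*J * chi d z) := by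
  rw [boltz, if_neg hz, chi]
  by_cases h1 : sqnorm z = 1
  · rw [if_pos h1, if_pos h1, mul_one]
  · rw [if_neg h1, if_neg h1, mul_zero, Real.exp_zero]

lemma prod_boltz_of_injective {β J : ℝ} {N : ℕ} {x : Fin N → (Fin d → ℤ)}
    (hx : Function.Injective x) :
    (∏ i : Fin N, ∏ j ∈ Finset.Ioi i, boltz d β J (x i - x j))
      = Real.exp (2*β*J * nn d (Finset.image x Finset.univ) (Finset.image x Finset.univ)) := by
  set g : Fin N → Fin N → ℝ := fun i j => chi d (x i - x j) with hg
  have hsym : ∀ i j, g i j = g j i := fun i j => chi_sub_comm (x j) (x i)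
  have hdiag : ∀ i, g i i = 0 := fun i => by simp [hg, chi_zero]
  have step1 : (∏ i : Fin N, ∏ j ∈ Finset.Ioi i, boltz d β J (x i - x j))
      = Real.exp (4*β*J * ∑ i : Fin N, ∑ j ∈ Finset.Ioi i, g i j) := by
    rw [Finset.mul_sum, Real.exp_sum]
    refine Finset.prod_congr rfl fun i _ => ?_
    rw [Finset.mul_sum, Real.exp_sum]
    refine Finset.prod_congr rfl fun j hj => ?_
    have hij : i ≠ j := ne_of_lt (Finset.mem_Ioi.1 hj)
    have : x i - x j ≠ 0 := sub_ne_zero.2 fun hc => hij (hx hc)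
    exact boltz_ne_zero this
  rw [step1]
  congr 1
  have h2 := sum_Ioi_twice g hsym hdiag
  have h3 : ∑ i : Fin N, ∑ j : Fin N, g i j
      = nn d (Finset.image x Finset.univ) (Finset.image x Finset.univ) := by
    rw [nn_eq_chi]
    rw [Finset.sum_image (fun a _ b _ hab => hx hab)]
    refine Finset.sum_congr rfl fun i _ => ?_
    rw [Finset.sum_image (fun a _ b _ hab => hx hab)]
    exact Finset.sum_congr rfl fun j _ => chi_sub_comm (x j) (x i)
  linear_combination 2*β*J*h2 + 2*β*J*h3

lemma prod_boltz_of_not_injective {β J : ℝ} {N : ℕ} {x : Fin N → (Fin d → ℤ)}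
    (hx : ¬ Function.Injective x) :
    (∏ i : Fin N, ∏ j ∈ Finset.Ioi i, boltz d β J (x i - x j)) = 0 := by
  simp only [Function.Injective, not_forall] at hx
  obtain ⟨i, j, hij, hne⟩ := hx
  rcases lt_or_gt_of_ne hne with hlt | hlt
  · refine Finset.prod_eq_zero (Finset.mem_univ i) ?_
    refine Finset.prod_eq_zero (Finset.mem_Ioi.2 hlt) ?_
    rw [hij, sub_self, boltz, if_pos rfl]
  · refine Finset.prod_eq_zero (Finset.mem_univ j) ?_
    refine Finset.prod_eq_zero (Finset.mem_Ioi.2 hlt) ?_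
    rw [← hij, sub_self, boltz, if_pos rfl]

lemma fiber_card {N : ℕ} {Λ A : Finset (Fin d → ℤ)} (hA : A ⊆ Λ) (hcard : A.card = N) :
    ((Fintype.piFinset fun _ : Fin N => Λ).filter
      (fun x => Finset.image x Finset.univ = A)).card = N.factorial := by
  have hAfin : Fintype.card {a // a ∈ A} = N := by rw [Fintype.card_coe]; exact hcard
  have hfin : Fintype.card (Fin N ≃ {a // a ∈ A}) = N.factorial := by
    rw [Fintype.card_equiv (Fintype.equivOfCardEq (by simp [hAfin]))]
    simp
  rw [← hfin, ← Finset.card_univ]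
  refine Finset.card_bij' (fun x hx => ?_) (fun e _ => fun i => (e i : Fin d → ℤ)) ?_ ?_ ?_ ?_
  · -- forward map: x injective tuple ↦ equiv
    rw [Finset.mem_filter] at hx
    have himg : Finset.image x Finset.univ = A := hx.2
    have hinj : Function.Injective x := by
      rw [← Set.injOn_univ, ← Finset.coe_univ]
      exact Finset.card_image_iff.1 (by rw [himg, hcard, Finset.card_univ, Fintype.card_fin])
    refine Equiv.ofBijective (fun i => ⟨x i, himg ▸ Finset.mem_image_of_mem x (Finset.mem_univ i)⟩)
      ((Fintype.bijective_iff_injective_and_card _).2 ⟨fun a b hab => hinj (congrArg Subtype.val hab), by simp [hAfin]⟩)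
  · intro x hx; exact Finset.mem_univ _
  · -- backward membership
    intro e _
    rw [Finset.mem_filter]
    constructor
    · rw [Fintype.mem_piFinset]; intro i; exact hA (e i).2
    · apply Finset.Subset.antisymm
      · intro a ha
        rw [Finset.mem_image] at ha
        obtain ⟨i, _, rfl⟩ := ha
        exact (e i).2
      · intro a ha
        rw [Finset.mem_image]
        exact ⟨e.symm ⟨a, ha⟩, Finset.mem_univ _, by simp⟩
  · intro x hx; rfl
  · intro e _; ext i; rfl

lemma injective_of_fiber {N : ℕ} {A : Finset (Fin d → ℤ)} {x : Fin N → (Fin d → ℤ)}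
    (himg : Finset.image x Finset.univ = A) (hcard : A.card = N) :
    Function.Injective x := by
  rw [← Set.injOn_univ, ← Finset.coe_univ]
  exact Finset.card_image_iff.1 (by rw [himg, hcard, Finset.card_univ, Fintype.card_fin])

lemma Zcan_eq (β J : ℝ) (Λ : Finset (Fin d → ℤ)) (N : ℕ) :
    Zcan d β J Λ N
      = ∑ A ∈ Λ.powerset.filter (fun A => A.card = N), Real.exp (2*β*J * nn d A A) := by
  rw [Zcan]
  rw [← Finset.sum_fiberwise_of_maps_to (g := fun x => Finset.image x Finset.univ)
    (t := Λ.powerset) (fun x hx => Finset.mem_powerset.2 (fun a ha => by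
      rw [Finset.mem_image] at ha
      obtain ⟨i, _, rfl⟩ := ha
      exact Fintype.mem_piFinset.1 hx i))]
  have fib : ∀ A ∈ Λ.powerset,
      (∑ x ∈ (Fintype.piFinset fun _ : Fin N => Λ).filter
          (fun x => Finset.image x Finset.univ = A),
        ∏ i, ∏ j ∈ Finset.Ioi i, boltz d β J (x i - x j))
      = if A.card = N then (N.factorial : ℝ) * Real.exp (2*β*J * nn d A A) else 0 := by
    intro A hA
    by_cases hc : A.card = N
    · rw [if_pos hc]
      have hval : ∀ x ∈ (Fintype.piFinset fun _ : Fin N => Λ).filter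
          (fun x => Finset.image x Finset.univ = A),
          (∏ i, ∏ j ∈ Finset.Ioi i, boltz d β J (x i - x j))
            = Real.exp (2*β*J * nn d A A) := by
        intro x hx
        have himg : Finset.image x Finset.univ = A := (Finset.mem_filter.1 hx).2
        exact (prod_boltz_of_injective (injective_of_fiber himg hc)).trans (by rw [himg])
      rw [Finset.sum_congr rfl hval, Finset.sum_const, nsmul_eq_mul,
        fiber_card (Finset.mem_powerset.1 hA) hc]
    · rw [if_neg hc]
      refine Finset.sum_eq_zero fun x hx => ?_
      have himg : Finset.image x Finset.univ = A := (Finset.mem_filter.1 hx).2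
      refine prod_boltz_of_not_injective fun hinj => hc ?_
      rw [← himg, Finset.card_image_of_injective _ hinj, Finset.card_univ, Fintype.card_fin]
  rw [Finset.sum_congr rfl fib, ← Finset.sum_filter, Finset.mul_sum]
  refine Finset.sum_congr rfl fun A hA => ?_
  rw [← mul_assoc, inv_mul_cancel₀ (by exact_mod_cast N.factorial_ne_zero), one_mul]

lemma Zcan_zero {β J : ℝ} {Λ : Finset (Fin d → ℤ)} {N : ℕ} (hN : Λ.card < N) :
    Zcan d β J Λ N = 0 := by
  rw [Zcan_eq]
  refine Finset.sum_eq_zero fun A hA => ?_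
  rw [Finset.mem_filter, Finset.mem_powerset] at hA
  exact absurd (hA.2 ▸ Finset.card_le_card hA.1) (by omega)

lemma GCpart_eq (β J μ : ℝ) (Λ : Finset (Fin d → ℤ)) :
    GCpart d β J μ Λ
      = ∑ A ∈ Λ.powerset, Real.exp (β*μ*A.card) * Real.exp (2*β*J * nn d A A) := by
  rw [GCpart]
  rw [tsum_eq_sum (s := Finset.range (Λ.card + 1)) (f := fun N : ℕ => Real.exp (β * μ * N) * Zcan d β J Λ N)
    (fun N hN => by
      have : Λ.card < N := by
        rw [Finset.mem_range] at hN; omega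
      rw [Zcan_zero this, mul_zero])]
  rw [← Finset.sum_fiberwise_of_maps_to (g := fun A : Finset (Fin d → ℤ) => A.card)
    (t := Finset.range (Λ.card + 1))
    (fun A hA => Finset.mem_range.2 (Nat.lt_succ_of_le
      (Finset.card_le_card (Finset.mem_powerset.1 hA))))]
  refine Finset.sum_congr rfl fun N hN => ?_
  rw [Zcan_eq, Finset.mul_sum]
  refine Finset.sum_congr rfl fun A hA => ?_
  rw [Finset.mem_filter] at hA
  rw [hA.2]

/-- occupation indicator -/
noncomputable def ind (B : Finset (Fin d → ℤ)) (x : Fin d → ℤ) : ℝ := if x ∈ B then 1 else 0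

lemma sum_ind {A Λ : Finset (Fin d → ℤ)} (hAΛ : A ⊆ Λ) (F : (Fin d → ℤ) → ℝ) :
    ∑ x ∈ Λ, ind A x * F x = ∑ x ∈ A, F x := by
  have key : ∀ x ∈ Λ, ind A x * F x = if x ∈ A then F x else 0 := fun x _ => by
    rw [ind]; split <;> simp
  rw [Finset.sum_congr rfl key, Finset.sum_ite_mem, Finset.inter_eq_right.2 hAΛ]

/-- occupied set of a spin configuration -/
noncomputable def occ (Λ : Finset (Fin d → ℤ)) (s : {a // a ∈ Λ} → Bool) :
    Finset (Fin d → ℤ) :=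
  (Λ.attach.filter (fun a => s a)).image Subtype.val

lemma mem_occ {Λ : Finset (Fin d → ℤ)} {s : {a // a ∈ Λ} → Bool} {x : Fin d → ℤ} :
    x ∈ occ Λ s ↔ ∃ hx : x ∈ Λ, s ⟨x, hx⟩ = true := by
  constructor
  · intro hx
    rw [occ, Finset.mem_image] at hx
    obtain ⟨a, ha, rfl⟩ := hx
    exact ⟨a.2, by simpa using (Finset.mem_filter.1 ha).2⟩
  · rintro ⟨hx, hs⟩
    rw [occ, Finset.mem_image]
    exact ⟨⟨x, hx⟩, Finset.mem_filter.2 ⟨Finset.mem_attach _ _, hs⟩, rfl⟩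

lemma occ_subset {Λ : Finset (Fin d → ℤ)} {s : {a // a ∈ Λ} → Bool} : occ Λ s ⊆ Λ :=
  fun x hx => (mem_occ.1 hx).1

lemma spinOf_eq {Λ : Finset (Fin d → ℤ)} (s : {a // a ∈ Λ} → Bool) (x : Fin d → ℤ) :
    spinOf Λ s x = 2 * ind (occ Λ s) x - 1 := by
  by_cases hx : x ∈ Λ
  · rw [spinOf, dif_pos hx, ind]
    by_cases hs : s ⟨x, hx⟩
    · rw [if_pos hs, if_pos (mem_occ.2 ⟨hx, hs⟩)]; norm_num
    · rw [if_neg hs, if_neg (fun hc => hs (mem_occ.1 hc).2)]; norm_num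
  · rw [spinOf, dif_neg hx, ind, if_neg (fun hc => hx (occ_subset hc))]; norm_num

lemma card_occ {Λ : Finset (Fin d → ℤ)} (s : {a // a ∈ Λ} → Bool) :
    ((occ Λ s).card : ℝ) = ∑ x : {a // a ∈ Λ}, (if s x then (1:ℝ) else 0) := by
  rw [occ, Finset.card_image_of_injective _ Subtype.val_injective]
  rw [Finset.sum_boole]
  rw [Finset.univ_eq_attach]

lemma sum_spinval {Λ : Finset (Fin d → ℤ)} (s : {a // a ∈ Λ} → Bool) :
    (∑ x : {a // a ∈ Λ}, spinval (s x)) = 2 * ((occ Λ s).card : ℝ) - Λ.card := by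
  have key : ∀ x : {a // a ∈ Λ}, spinval (s x) = 2 * (if s x then (1:ℝ) else 0) - 1 := by
    intro x; rw [spinval]; split <;> norm_num
  rw [Finset.sum_congr rfl (fun x _ => key x), Finset.sum_sub_distrib, ← Finset.mul_sum,
    ← card_occ, Finset.sum_const, Finset.card_univ, Fintype.card_coe]
  simp

lemma sum_two : (∑ _i : Fin d, ∑ _b : Bool, (2:ℝ)) = 4 * d := by
  simp [Finset.sum_const, Finset.card_univ]
  ring

lemma perx {Λ A : Finset (Fin d → ℤ)} (hAΛ : A ⊆ Λ) (σ : (Fin d → ℤ) → ℝ)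
    (hσ : ∀ y, σ y = 2 * ind A y - 1) (x : Fin d → ℤ) :
    (∑ i : Fin d, ∑ b : Bool,
        (if nbr x i b ∈ Λ then (1/2:ℝ) else 1) * σ x * σ (nbr x i b))
      = ind A x * (∑ i : Fin d, ∑ b : Bool,
          (2 * ind A (nbr x i b) - 2 + ind Λ (nbr x i b)))
        - (∑ i : Fin d, ∑ b : Bool, ind A (nbr x i b))
        + ∑ i : Fin d, ∑ b : Bool, (if nbr x i b ∈ Λ then (1/2:ℝ) else 1) := by
  simp only [Finset.mul_sum, ← Finset.sum_sub_distrib, ← Finset.sum_add_distrib]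
  refine Finset.sum_congr rfl fun i _ => Finset.sum_congr rfl fun b _ => ?_
  rw [hσ x, hσ (nbr x i b)]
  by_cases h' : nbr x i b ∈ Λ
  · rw [if_pos h', show ind Λ (nbr x i b) = 1 from if_pos h']
    ring
  · have ha' : nbr x i b ∉ A := fun hc => h' (hAΛ hc)
    rw [if_neg h', show ind Λ (nbr x i b) = 0 from if_neg h',
      show ind A (nbr x i b) = 0 from if_neg ha']
    ring

lemma S_eq {Λ A : Finset (Fin d → ℤ)} (hAΛ : A ⊆ Λ) (σ : (Fin d → ℤ) → ℝ)
    (hσ : ∀ y, σ y = 2 * ind A y - 1) :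
    (∑ x ∈ Λ, ∑ i : Fin d, ∑ b : Bool,
        (if nbr x i b ∈ Λ then (1/2:ℝ) else 1) * σ x * σ (nbr x i b))
      = 2 * nn d A A - 4 * d * A.card + edgeCount d Λ := by
  rw [Finset.sum_congr rfl (fun x _ => perx hAΛ σ hσ x)]
  rw [Finset.sum_add_distrib, Finset.sum_sub_distrib]
  have t4 : (∑ x ∈ Λ, ∑ i : Fin d, ∑ b : Bool,
      (if nbr x i b ∈ Λ then (1/2:ℝ) else 1)) = edgeCount d Λ := rfl
  have t3 : (∑ x ∈ Λ, ∑ i : Fin d, ∑ b : Bool, ind A (nbr x i b)) = nn d A Λ := by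
    rw [← nn_symm]
    rfl
  have t1 : (∑ x ∈ Λ, ind A x * (∑ i : Fin d, ∑ b : Bool,
      (2 * ind A (nbr x i b) - 2 + ind Λ (nbr x i b))))
      = 2 * nn d A A - 4 * d * A.card + nn d A Λ := by
    rw [sum_ind hAΛ]
    simp only [Finset.sum_add_distrib, Finset.sum_sub_distrib]
    have u1 : (∑ x ∈ A, ∑ i : Fin d, ∑ b : Bool, 2 * ind A (nbr x i b))
        = 2 * nn d A A := by
      simp only [← Finset.mul_sum]
      rfl
    have u2 : (∑ x ∈ A, ∑ i : Fin d, ∑ b : Bool, (2:ℝ)) = 4 * d * A.card := by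
      rw [Finset.sum_congr rfl fun x (_ : x ∈ A) => sum_two, Finset.sum_const]
      rw [nsmul_eq_mul]
      ring
    have u3 : (∑ x ∈ A, ∑ i : Fin d, ∑ b : Bool, ind Λ (nbr x i b)) = nn d A Λ := rfl
    rw [u1, u2, u3]
  rw [t4, t3, t1]
  ring

lemma sum_powerset_config (Λ : Finset (Fin d → ℤ)) (G : Finset (Fin d → ℤ) → ℝ) :
    ∑ A ∈ Λ.powerset, G A = ∑ s : {a // a ∈ Λ} → Bool, G (occ Λ s) := by
  have hocc : ∀ A ∈ Λ.powerset,
      occ Λ (fun a : {a // a ∈ Λ} => (decide (a.1 ∈ A) : Bool)) = A := by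
    intro A hA
    have hAΛ := Finset.mem_powerset.1 hA
    ext x
    rw [mem_occ]
    constructor
    · rintro ⟨hx, hs⟩; simpa using hs
    · intro hx; exact ⟨hAΛ hx, by simpa using hx⟩
  refine Finset.sum_bij' (i := fun A _ => fun a : {a // a ∈ Λ} => (decide (a.1 ∈ A) : Bool))
    (j := fun s _ => occ Λ s) (fun A hA => Finset.mem_univ _)
    (fun s _ => Finset.mem_powerset.2 occ_subset) (fun A hA => hocc A hA) ?_ ?_
  · -- indicator of occ = s
    intro s _
    funext a
    by_cases hs : s a
    · rw [hs]
      exact decide_eq_true (mem_occ.2 ⟨a.2, by rw [Subtype.coe_eta]; exact hs⟩)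
    · simp only [Bool.not_eq_true] at hs
      rw [hs]
      refine decide_eq_false fun hc => ?_
      obtain ⟨hx, hss⟩ := mem_occ.1 hc
      rw [Subtype.coe_eta, hs] at hss
      exact Bool.false_ne_true hss
  · intro A hA
    rw [hocc A hA]


/-- relation between the Ising and lattice-gas grand-canonical
partition functions: `Ξ̃⁻_{Λ,β}(h) = exp(-β(h|Λ| - J|E_Λ|)) Ξ⁰_{Λ,β}(2h - 4Jd)`. -/
theorem ising_lattice_gas_grand_canonical_relation
    (d : ℕ) (hd : 1 ≤ d) (J β : ℝ) (hJ : 0 < J) (hβ : 0 ≤ β)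
    (Λ : Finset (Fin d → ℤ)) (h : ℝ) :
    XiIsing d β J h Λ =
      Real.exp (-β * (h * (Λ.card : ℝ) - J * edgeCount d Λ)) *
        GCpart d β J (2*h - 4*J*(d : ℝ)) Λ := by
  rw [XiIsing, GCpart_eq, sum_powerset_config, Finset.mul_sum]
  refine Finset.sum_congr rfl fun s _ => ?_
  have hiso : isingH d J Λ s
      = -J * (2 * nn d (occ Λ s) (occ Λ s) - 4 * d * (occ Λ s).card + edgeCount d Λ) := by
    rw [isingH]
    congr 1
    exact S_eq occ_subset (spinOf Λ s) (spinOf_eq s)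
  rw [hiso, sum_spinval, ← Real.exp_add, ← Real.exp_add]
  congr 1
  push_cast
  ring


end IsingCE
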